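/- Let ρ and σ be density operators on a finite-dimensional Hilbert space with equal supports (Π_ρ = Π_σ). Define T^max as the projection onto the eigenspace of σ^{-1/2}ρσ^{-1/2} (pseudoinverse square roots) corresponding to its largest eigenvalue R_max(ρ,σ). If ψ is a density operator invariant under the projection I − Π_σ + P^max, where P^max := Π_{σ^{-1/2}T^{max}σ^{-1/2}}, then Tr(ψρ) = R_max(ρ,σ) · Tr(ψσ). -/

import Mathlib

open Matrix
open scoped ComplexOrder

/-- `P` is an orthogonal projection matrix. -/
def IsOrthProj {n : ℕ} (P : Matrix (Fin n) (Fin n) ℂ) : Prop :=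
  P.IsHermitian ∧ P * P = P

/-- `P` is the orthogonal projection onto the range (support) of `ν`. -/
def IsSupportProj {n : ℕ} (ν P : Matrix (Fin n) (Fin n) ℂ) : Prop :=
  IsOrthProj P ∧ LinearMap.range P.mulVecLin = LinearMap.range ν.mulVecLin

/-- `P` is the orthogonal projection onto the eigenspace of `ν` for the (real)
eigenvalue `μ`. -/
def IsEigenProj {n : ℕ} (ν : Matrix (Fin n) (Fin n) ℂ) (μ : ℝ)
    (P : Matrix (Fin n) (Fin n) ℂ) : Prop :=
  IsOrthProj P ∧
    LinearMap.range P.mulVecLin = Module.End.eigenspace ν.mulVecLin (μ : ℂ)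

/-- `νinv` is the Moore–Penrose pseudoinverse of the PSD matrix `ν`,
where `Pnu` is the support projection of `ν`. -/
def IsPseudoInv {n : ℕ} (ν νinv Pnu : Matrix (Fin n) (Fin n) ℂ) : Prop :=
  νinv.PosSemidef ∧ νinv * ν = Pnu ∧ ν * νinv = Pnu ∧ Pnu * νinv = νinv

/-- For density operators `ρ, σ` with equal supports, if `ψ` is a density
operator invariant under `I − Π_σ + P^max` (with `P^max` the projection onto
the range of `σ^{-1/2} T^max σ^{-1/2}`, `T^max` the top eigenspace projection
of `σ^{-1/2} ρ σ^{-1/2}` with top eigenvalue `R_max(ρ,σ)`), then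
`Tr(ψρ) = R_max(ρ,σ) · Tr(ψσ)`. -/
lemma mext {n : ℕ} {M N : Matrix (Fin n) (Fin n) ℂ} (h : ∀ x, M *ᵥ x = N *ᵥ x) : M = N := by
  have : M.mulVecLin = N.mulVecLin := LinearMap.ext fun x => h x
  exact Matrix.toLin'.injective this

/-- A projection acts as the identity on matrices whose range lies inside its range. -/
lemma proj_mul_eq {n : ℕ} {P ν : Matrix (Fin n) (Fin n) ℂ} (hP2 : P * P = P)
    (hle : LinearMap.range ν.mulVecLin ≤ LinearMap.range P.mulVecLin) : P * ν = ν := by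
  apply mext
  intro x
  obtain ⟨y, hy⟩ := hle (LinearMap.mem_range_self ν.mulVecLin x)
  simp only [Matrix.mulVecLin_apply] at hy
  calc (P * ν) *ᵥ x = P *ᵥ (ν *ᵥ x) := by rw [← Matrix.mulVec_mulVec]
    _ = P *ᵥ (P *ᵥ y) := by rw [hy]
    _ = (P * P) *ᵥ y := by rw [Matrix.mulVec_mulVec]
    _ = P *ᵥ y := by rw [hP2]
    _ = ν *ᵥ x := hy

theorem stmt_15 {n : ℕ} (ρ σ : Matrix (Fin n) (Fin n) ℂ)
    (hρ : ρ.PosSemidef) (hσ : σ.PosSemidef)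
    (hρ1 : ρ.trace = 1) (hσ1 : σ.trace = 1)
    (Psig : Matrix (Fin n) (Fin n) ℂ)
    (hPsigσ : IsSupportProj σ Psig) (hPsigρ : IsSupportProj ρ Psig)
    (s : Matrix (Fin n) (Fin n) ℂ) (hs : s.PosSemidef) (hs2 : s * s = σ)
    (sinv : Matrix (Fin n) (Fin n) ℂ) (hsinv : IsPseudoInv s sinv Psig)
    (Rmax : ℝ)
    (hRmax : IsGreatest {r : ℝ |
      Module.End.HasEigenvalue (sinv * ρ * sinv).mulVecLin (r : ℂ)} Rmax)
    (Tmax : Matrix (Fin n) (Fin n) ℂ)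
    (hTmax : IsEigenProj (sinv * ρ * sinv) Rmax Tmax)
    (Pmax : Matrix (Fin n) (Fin n) ℂ)
    (hPmax : IsSupportProj (sinv * Tmax * sinv) Pmax)
    (ψ : Matrix (Fin n) (Fin n) ℂ) (hψ : ψ.PosSemidef) (hψ1 : ψ.trace = 1)
    (hψinv : (1 - Psig + Pmax) * ψ * (1 - Psig + Pmax) = ψ) :
    (ψ * ρ).trace = (Rmax : ℂ) * (ψ * σ).trace := by
  -- basic facts
  have hsinvH : sinvᴴ = sinv := hsinv.1.isHermitian
  have hssinv : s * sinv = Psig := hsinv.2.2.1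
  have hsinvs : sinv * s = Psig := hsinv.2.1
  -- support projection absorbs ρ and σ
  have hPρ : Psig * ρ = ρ := proj_mul_eq hPsigρ.1.2 (le_of_eq hPsigρ.2.symm)
  have hρP : ρ * Psig = ρ := by
    have := congrArg Matrix.conjTranspose hPρ
    rwa [Matrix.conjTranspose_mul, hPsigρ.1.1.eq, hρ.isHermitian.eq] at this
  have hPσ : Psig * σ = σ := proj_mul_eq hPsigσ.1.2 (le_of_eq hPsigσ.2.symm)
  have hσP : σ * Psig = σ := by
    have := congrArg Matrix.conjTranspose hPσ
    rwa [Matrix.conjTranspose_mul, hPsigσ.1.1.eq, hσ.isHermitian.eq] at this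
  set A := sinv * ρ * sinv with hAdef
  have hA : A.PosSemidef := by
    have := hρ.mul_mul_conjTranspose_same sinv
    rwa [hsinvH] at this
  have hsAs : s * A * s = ρ := by
    calc s * A * s = (s * sinv) * ρ * (sinv * s) := by
          simp only [hAdef, Matrix.mul_assoc]
      _ = ρ := by rw [hssinv, hsinvs, hPρ, hρP]
  -- A ≠ 0
  have hAne : A ≠ 0 := by
    intro h0
    rw [h0, Matrix.mul_zero, Matrix.zero_mul] at hsAs
    rw [← hsAs] at hρ1
    simp at hρ1
  -- Rmax > 0
  have hRpos : (0 : ℝ) < Rmax := by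
    have hAh : A.IsHermitian := hA.isHermitian
    -- some eigenvalue is nonzero
    have hex : ∃ j, hAh.eigenvalues j ≠ 0 := by
      by_contra hall
      push_neg at hall
      apply hAne
      have : Matrix.diagonal (RCLike.ofReal ∘ hAh.eigenvalues) = (0 : Matrix (Fin n) (Fin n) ℂ) := by
        ext i j
        by_cases hij : i = j <;>
          simp [Matrix.diagonal, hij, hall]
      rw [hAh.spectral_theorem, this, map_zero]
    obtain ⟨j, hj⟩ := hex
    have hjpos : 0 < hAh.eigenvalues j := lt_of_le_of_ne (hA.eigenvalues_nonneg j) (Ne.symm hj)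
    have hmem : Module.End.HasEigenvalue A.mulVecLin ((hAh.eigenvalues j : ℝ) : ℂ) := by
      apply Module.End.hasEigenvalue_of_hasEigenvector (x := ⇑(hAh.eigenvectorBasis j))
      constructor
      · rw [Module.End.mem_eigenspace_iff]
        have := hAh.mulVec_eigenvectorBasis j
        rw [Matrix.mulVecLin_apply, this]
        ext i
        simp [Complex.real_smul]
      · intro h0
        apply hAh.eigenvectorBasis.orthonormal.ne_zero j
        ext i
        exact congrFun h0 i
    have := hRmax.2 hmem
    linarith
  have hRne : ((Rmax : ℂ)) ≠ 0 := by
    simp only [ne_eq, Complex.ofReal_eq_zero]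
    linarith
  -- A * Tmax = Rmax • Tmax
  have hATmax : A * Tmax = (Rmax : ℂ) • Tmax := by
    apply mext
    intro x
    have hmem : Tmax *ᵥ x ∈ Module.End.eigenspace A.mulVecLin ((Rmax : ℝ) : ℂ) := by
      rw [← hTmax.2]
      exact LinearMap.mem_range_self Tmax.mulVecLin x
    rw [Module.End.mem_eigenspace_iff, Matrix.mulVecLin_apply] at hmem
    rw [← Matrix.mulVec_mulVec, Matrix.smul_mulVec]
    exact hmem
  -- Psig * A = A
  have hPsA : Psig * A = A := by
    calc Psig * A = (Psig * sinv) * ρ * sinv := by simp only [hAdef, Matrix.mul_assoc]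
      _ = A := by rw [hsinv.2.2.2]
  -- Psig * Tmax = Tmax
  have hPsT : Psig * Tmax = Tmax := by
    have h1 : Psig * (A * Tmax) = A * Tmax := by
      rw [← Matrix.mul_assoc, hPsA]
    rw [hATmax, Matrix.mul_smul] at h1
    have := smul_right_injective (Matrix (Fin n) (Fin n) ℂ) hRne h1
    exact this
  -- key matrix identities
  set M := sinv * Tmax * sinv with hMdef
  have hρsinv : ρ * sinv = s * A := by
    calc ρ * sinv = (Psig * ρ) * sinv := by rw [hPρ]
      _ = (s * sinv) * ρ * sinv := by rw [hssinv]
      _ = s * A := by simp only [hAdef, Matrix.mul_assoc]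
  have hρM : ρ * M = (Rmax : ℂ) • (σ * M) := by
    have h1 : ρ * M = (Rmax : ℂ) • (s * Tmax * sinv) := by
      calc ρ * M = (ρ * sinv) * Tmax * sinv := by simp only [hMdef, Matrix.mul_assoc]
        _ = s * (A * Tmax) * sinv := by rw [hρsinv, Matrix.mul_assoc s A Tmax]
        _ = s * ((Rmax : ℂ) • Tmax) * sinv := by rw [hATmax]
        _ = (Rmax : ℂ) • (s * Tmax * sinv) := by
            rw [Matrix.mul_smul, Matrix.smul_mul]
    have h2 : σ * M = s * Tmax * sinv := by
      calc σ * M = (s * s) * sinv * Tmax * sinv := by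
            rw [hs2]; simp only [hMdef, Matrix.mul_assoc]
        _ = s * (Psig * Tmax) * sinv := by
            rw [Matrix.mul_assoc s s sinv, hssinv]
            simp only [Matrix.mul_assoc]
        _ = s * Tmax * sinv := by rw [hPsT]
    rw [h1, h2]
  -- ρ * Pmax = Rmax • (σ * Pmax)
  have hρPmax : ρ * Pmax = (Rmax : ℂ) • (σ * Pmax) := by
    apply mext
    intro x
    have hmem : Pmax *ᵥ x ∈ LinearMap.range M.mulVecLin := by
      rw [← hPmax.2]
      exact LinearMap.mem_range_self Pmax.mulVecLin x
    obtain ⟨y, hy⟩ := hmem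
    rw [Matrix.mulVecLin_apply] at hy
    calc (ρ * Pmax) *ᵥ x = ρ *ᵥ (Pmax *ᵥ x) := by rw [← Matrix.mulVec_mulVec]
      _ = ρ *ᵥ (M *ᵥ y) := by rw [hy]
      _ = (ρ * M) *ᵥ y := by rw [Matrix.mulVec_mulVec]
      _ = ((Rmax : ℂ) • (σ * M)) *ᵥ y := by rw [hρM]
      _ = (Rmax : ℂ) • (σ *ᵥ (M *ᵥ y)) := by
          rw [Matrix.smul_mulVec, ← Matrix.mulVec_mulVec]
      _ = (Rmax : ℂ) • ((σ * Pmax) *ᵥ x) := by rw [hy, Matrix.mulVec_mulVec]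
      _ = ((Rmax : ℂ) • (σ * Pmax)) *ᵥ x := by rw [Matrix.smul_mulVec]
  -- Q := 1 - Psig + Pmax
  set Q := (1 : Matrix (Fin n) (Fin n) ℂ) - Psig + Pmax with hQdef
  have hρQ : ρ * Q = (Rmax : ℂ) • (σ * Q) := by
    have h1 : ρ * Q = (Rmax : ℂ) • (σ * Pmax) := by
      rw [hQdef, Matrix.mul_add, Matrix.mul_sub, Matrix.mul_one, hρP, sub_self, zero_add, hρPmax]
    have h2 : σ * Q = σ * Pmax := by
      rw [hQdef, Matrix.mul_add, Matrix.mul_sub, Matrix.mul_one, hσP, sub_self, zero_add]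
    rw [h1, h2]
  -- conclude using trace cyclicity
  have key : ∀ X : Matrix (Fin n) (Fin n) ℂ, (Q * ψ * Q * X).trace = (ψ * (Q * X * Q)).trace := by
    intro X
    rw [show Q * ψ * Q * X = Q * (ψ * (Q * X)) from by simp only [Matrix.mul_assoc],
      Matrix.trace_mul_comm,
      show ψ * (Q * X) * Q = ψ * (Q * X * Q) from by simp only [Matrix.mul_assoc]]
  rw [← hψinv]
  rw [key ρ, key σ]
  have hQρQ : Q * ρ * Q = (Rmax : ℂ) • (Q * σ * Q) := by
    have hQH : Qᴴ = Q := by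
      rw [hQdef]
      simp [Matrix.conjTranspose_add, Matrix.conjTranspose_sub, hPsigσ.1.1.eq, hPmax.1.1.eq]
    have : Q * ρ = ((Rmax : ℂ)) • (Q * σ) := by
      have := congrArg Matrix.conjTranspose hρQ
      rw [Matrix.conjTranspose_mul, Matrix.conjTranspose_smul, Matrix.conjTranspose_mul,
        hQH, hρ.isHermitian.eq, hσ.isHermitian.eq] at this
      rw [this]
      congr 1
      simp [Complex.conj_ofReal]
    rw [this, Matrix.smul_mul]
  rw [hQρQ, Matrix.mul_smul, Matrix.trace_smul, smul_eq_mul]
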